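/- (Tournament form, nontransitive case / Master Theorem) Let T be a nontransitive tournament on n vertices and a₁,…,aₙ positive integers. Then the constant term of ∏_{(i,j)∈T} (xᵢ/x_j;q)_{aᵢ}(q x_j/xᵢ;q)_{a_j−1} equals 0. -/

import Mathlib

noncomputable section
open Finset

/-- The field ℚ(q) of rational functions in `q`. -/
abbrev K : Type := RatFunc ℚ

/-- The variable `q`. -/
abbrev qq : K := RatFunc.X

/-- Laurent polynomials in `x₁, …, xₙ` over ℚ(q). -/
abbrev ML (n : ℕ) := AddMonoidAlgebra K (Fin n →₀ ℤ)

/-- The constant term of a Laurent polynomial. -/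
def CT {n : ℕ} (f : ML n) : K := f.coeff 0

/-- The exponent vector of `xᵢ`. -/
def e {n : ℕ} (i : Fin n) : Fin n →₀ ℤ := Finsupp.single i 1

/-- The q-shifted factorial `(c·x^v ; q)_k` as a Laurent polynomial. -/
def poch {n : ℕ} (v : Fin n →₀ ℤ) (c : K) (k : ℕ) : ML n :=
  ∏ t ∈ Finset.range k, (1 - AddMonoidAlgebra.single v (c * qq ^ t))

/-- `(q;q)_k`. -/
def qf (k : ℕ) : K := ∏ i ∈ Finset.range k, (1 - qq ^ (i + 1))

/-- The Gaussian binomial coefficient `[N choose m]_q`. -/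
def qbin (N m : ℕ) : K := if m ≤ N then qf N / (qf m * qf (N - m)) else 0

/-- The q-multinomial coefficient `[|a| choose a]_q`. -/
def qmul {n : ℕ} (a : Fin n → ℕ) : K := qf (∑ i, a i) / ∏ i, qf (a i)

/-- The q-shifted factorial `(c;q)_m` in ℚ(q). -/
def qpochK (c : K) (m : ℕ) : K := ∏ i ∈ Finset.range m, (1 - c * qq ^ i)

/-- The partial sum `σᵢ = a₁ + ⋯ + aᵢ`. -/
def sig {n : ℕ} (a : Fin n → ℕ) (i : Fin n) : ℕ := ∑ j ∈ Finset.univ.filter (· ≤ i), a j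

/-- The set of pairs `(i,j)` with `i < j`. -/
def pairs (n : ℕ) : Finset (Fin n × Fin n) := Finset.univ.filter (fun p => p.1 < p.2)

/-- `R(w) = {(w(j),w(i)) : i < j, w(i) > w(j)}`, the inversion set of `w⁻¹`. -/
def Rset {n : ℕ} (w : Equiv.Perm (Fin n)) : Finset (Fin n × Fin n) :=
  (pairs n).filter (fun p => w.symm p.2 < w.symm p.1)

/-- The q-Dyson kernel `∏_{i<j} (xᵢ/xⱼ;q)_{aᵢ} (q xⱼ/xᵢ;q)_{aⱼ}`. -/
def kadellKer {n : ℕ} (a : Fin n → ℕ) : ML n :=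
  ∏ p ∈ pairs n, poch (e p.1 - e p.2) 1 (a p.1) * poch (e p.2 - e p.1) qq (a p.2)

/-- `x^{-v}` for a composition `v`. -/
def negv {n : ℕ} (v : Fin n → ℕ) : Fin n →₀ ℤ :=
  Finsupp.equivFunOnFinite.symm (fun i => -(v i : ℤ))

/-- The complete homogeneous symmetric function `h_m` of a finite family of
ring elements. -/
def hfun {R : Type*} [CommRing R] {ι : Type*} [Fintype ι] [DecidableEq ι]
    (y : ι → R) (m : ℕ) : R := ∑ s : Sym ι m, (s.1.map y).prod

/-- `h_k` extended by zero to integer indices. -/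
def hz {R : Type*} [CommRing R] {ι : Type*} [Fintype ι] [DecidableEq ι]
    (y : ι → R) (k : ℤ) : R := if 0 ≤ k then hfun y k.toNat else 0

/-- The Schur function `s_λ` of a finite family of ring elements, defined by the
Jacobi–Trudi determinant `det(h_{λᵢ−i+j})`. -/
def schur {R : Type*} [CommRing R] {ι : Type*} [Fintype ι] [DecidableEq ι]
    (y : ι → R) {L : ℕ} (lam : Fin L → ℕ) : R :=
  Matrix.det (Matrix.of fun i j : Fin L => hz y ((lam i : ℤ) - (i : ℤ) + (j : ℤ)))

/-- The alphabet `x^{(a)} = (x₁, x₁q, …, x₁q^{a₁−1}, …, xₙ, …, xₙq^{aₙ−1})`. -/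
def alphabet {n : ℕ} (a : Fin n → ℕ) : (Σ i : Fin n, Fin (a i)) → ML n :=
  fun p => AddMonoidAlgebra.single (e p.1) (qq ^ (p.2 : ℕ))

namespace TNT

instance : DecidableEq K := Classical.decEq _

lemma qq_ne_zero : (qq : K) ≠ 0 := RatFunc.X_ne_zero

lemma qq_pow_ne_one {k : ℕ} (hk : k ≠ 0) : (qq : K) ^ k ≠ 1 := by
  intro h
  have h1 : (algebraMap (Polynomial ℚ) K) (Polynomial.X ^ k) =
      (algebraMap (Polynomial ℚ) K) 1 := by
    rw [map_pow, RatFunc.algebraMap_X, map_one, h]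
  have h2 := RatFunc.algebraMap_injective ℚ h1
  have h3 := congrArg Polynomial.natDegree h2
  rw [Polynomial.natDegree_X_pow, Polynomial.natDegree_one] at h3
  exact hk h3

lemma qq_zpow_ne_one {x : ℤ} (hx : x ≠ 0) : (qq : K) ^ x ≠ 1 := by
  intro h
  rcases lt_trichotomy x 0 with hlt | h0 | hgt
  · have h' : (qq : K) ^ (-x) = 1 := by rw [zpow_neg, h, inv_one]
    apply qq_pow_ne_one (k := (-x).toNat) (by omega)
    rw [← zpow_natCast, Int.toNat_of_nonneg (by omega)]
    exact h'
  · exact hx h0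
  · apply qq_pow_ne_one (k := x.toNat) (by omega)
    rw [← zpow_natCast, Int.toNat_of_nonneg (by omega)]
    exact h

/-- the grid point `q^{-x}`. -/
def zq (x : ℤ) : K := (qq : K) ^ (-x)

lemma zq_ne_zero (x : ℤ) : zq x ≠ 0 := zpow_ne_zero _ qq_ne_zero

lemma zq_injective : Function.Injective zq := by
  intro x y h
  by_contra hne
  have h1 : zq x / zq y = 1 := by rw [h, div_self (zq_ne_zero y)]
  rw [zq, zq, ← zpow_sub₀ qq_ne_zero] at h1
  exact qq_zpow_ne_one (by omega) h1

open Polynomial in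
lemma coeff_basis_top {s : Finset K} {x : K} (hx : x ∈ s) :
    (Lagrange.basis s id x).coeff (s.card - 1) = (∏ y ∈ s.erase x, (x - y))⁻¹ := by
  have hb : Lagrange.basis s id x
      = Polynomial.C ((∏ y ∈ s.erase x, (x - y))⁻¹) * ∏ y ∈ s.erase x, (X - C y) := by
    simp only [Lagrange.basis, Lagrange.basisDivisor, id]
    rw [Finset.prod_mul_distrib, ← Finset.prod_inv_distrib, map_prod]
  have hmon : (∏ y ∈ s.erase x, ((X : K[X]) - C y)).Monic :=
    Polynomial.monic_prod_of_monic _ _ (fun y _ => Polynomial.monic_X_sub_C y)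
  have hdeg : (∏ y ∈ s.erase x, ((X : K[X]) - C y)).natDegree = s.card - 1 := by
    rw [Polynomial.natDegree_prod_of_monic _ _ (fun y _ => Polynomial.monic_X_sub_C y)]
    simp [Polynomial.natDegree_X_sub_C, Finset.card_erase_of_mem hx]
  rw [hb, Polynomial.coeff_C_mul, ← hdeg, hmon.coeff_natDegree, mul_one]

open Polynomial in
lemma lag_sum (s : Finset K) (k : ℕ) (hk : k < s.card) :
    (∑ x ∈ s, x ^ k * (∏ y ∈ s.erase x, (x - y))⁻¹)
      = if k = s.card - 1 then 1 else 0 := by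
  have hinj : Set.InjOn (id : K → K) ↑s := Function.injective_id.injOn
  have hdeg : ((X : K[X]) ^ k).degree < (s.card : WithBot ℕ) := by
    rw [Polynomial.degree_X_pow]; exact_mod_cast hk
  have h := Lagrange.eq_interpolate hinj hdeg
  have hc := congrArg (fun p => Polynomial.coeff p (s.card - 1)) h
  simp only [Lagrange.interpolate_apply, Polynomial.finset_sum_coeff,
    Polynomial.coeff_C_mul, Polynomial.coeff_X_pow, Polynomial.eval_pow,
    Polynomial.eval_X, id] at hc
  rw [Finset.sum_congr rfl (fun x hxs => by rw [coeff_basis_top hxs])] at hc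
  rw [← hc]
  by_cases hkk : k = s.card - 1 <;> simp [hkk, eq_comm]

lemma zlag_sum (B : Finset ℤ) (k : ℕ) (hk : k < B.card) :
    (∑ x ∈ B, (zq x) ^ k * (∏ y ∈ B.erase x, (zq x - zq y))⁻¹)
      = if k = B.card - 1 then 1 else 0 := by
  have hcard : (B.image zq).card = B.card := Finset.card_image_of_injective _ zq_injective
  have himg := lag_sum (B.image zq) k (by rwa [hcard])
  rw [Finset.sum_image (fun x _ y _ h => zq_injective h)] at himg
  rw [hcard] at himg
  rw [← himg]
  refine Finset.sum_congr rfl (fun x hx => ?_)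
  congr 1
  rw [← Finset.image_erase zq_injective]
  rw [Finset.prod_image (fun a _ b _ h => zq_injective h)]

/-- `q^(∑ g)` = `∏ q^(g i)`. -/
lemma prod_qq_zpow {ι : Type*} (s : Finset ι) (g : ι → ℤ) :
    ∏ i ∈ s, (qq : K) ^ (g i) = (qq : K) ^ (∑ i ∈ s, g i) := by
  induction s using Finset.cons_induction with
  | empty => simp
  | cons i s his ih => rw [Finset.prod_cons, Finset.sum_cons, ih, ← zpow_add₀ qq_ne_zero]

variable {n : ℕ}


/-- The multiplicative character sending `x^w` to `q^{-∑ u i * w i}`. -/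
def chi (u : Fin n → ℤ) : Multiplicative (Fin n →₀ ℤ) →* K where
  toFun m := (qq : K) ^ (- ∑ i, u i * (Multiplicative.toAdd m) i)
  map_one' := by simp
  map_mul' := fun m m' => by
    show (qq : K) ^ (- ∑ i, u i * ((Multiplicative.toAdd m + Multiplicative.toAdd m') i)) = _
    rw [← zpow_add₀ qq_ne_zero]
    congr 1
    have h : (∑ i, u i * ((Multiplicative.toAdd m + Multiplicative.toAdd m') i))
        = (∑ i, u i * (Multiplicative.toAdd m) i) + (∑ i, u i * (Multiplicative.toAdd m') i) := by
      rw [← Finset.sum_add_distrib]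
      exact Finset.sum_congr rfl fun l _ => by rw [Finsupp.add_apply, mul_add]
    rw [h, neg_add]

/-- Evaluation of a Laurent polynomial at the point `x_i = q^{-u i}`. -/
def Ev (u : Fin n → ℤ) : AddMonoidAlgebra K (Fin n →₀ ℤ) →ₐ[K] K :=
  AddMonoidAlgebra.lift K K (Fin n →₀ ℤ) (chi u)

lemma Ev_single (u : Fin n → ℤ) (m : Fin n →₀ ℤ) (b : K) :
    Ev u (AddMonoidAlgebra.single m b) = b * (qq : K) ^ (- ∑ i, u i * m i) := by
  rw [Ev, AddMonoidAlgebra.lift_single]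
  rfl

lemma sum_mul_single_sub (u : Fin n → ℤ) (i j : Fin n) :
    (∑ l, u l * ((e i - e j) l)) = u i - u j := by
  have h1 : ∀ (i : Fin n), (∑ l, u l * ((e i) l)) = u i := by
    intro i
    rw [Finset.sum_eq_single i]
    · simp [e, Finsupp.single_apply]
    · intro b _ hb
      simp [e, Finsupp.single_apply, Ne.symm hb]
    · simp
  have : ∀ l, u l * ((e i - e j) l) = u l * (e i) l - u l * (e j) l := by
    intro l; rw [Finsupp.sub_apply, mul_sub]
  rw [Finset.sum_congr rfl (fun l _ => this l), Finset.sum_sub_distrib, h1, h1]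

lemma Ev_poch (u : Fin n → ℤ) (v : Fin n →₀ ℤ) (c : K) (k : ℕ) :
    Ev u (poch v c k) = ∏ t ∈ Finset.range k,
      (1 - c * (qq : K) ^ (t : ℤ) * (qq : K) ^ (- ∑ i, u i * v i)) := by
  rw [poch, map_prod]
  refine Finset.prod_congr rfl (fun t _ => ?_)
  rw [map_sub, map_one, Ev_single]
  rw [zpow_natCast]

lemma Ev_poch1_zero (u : Fin n → ℤ) (i j : Fin n) (k : ℕ)
    (h0 : 0 ≤ u i - u j) (h1 : u i - u j < (k : ℤ)) :
    Ev u (poch (e i - e j) 1 k) = 0 := by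
  rw [Ev_poch, sum_mul_single_sub]
  apply Finset.prod_eq_zero (i := (u i - u j).toNat)
  · simp only [Finset.mem_range]; omega
  · rw [one_mul, ← zpow_add₀ qq_ne_zero]
    have : ((u i - u j).toNat : ℤ) + -(u i - u j) = 0 := by omega
    rw [this, zpow_zero, sub_self]

lemma Ev_poch2_zero (u : Fin n → ℤ) (i j : Fin n) (k : ℕ)
    (h0 : 1 ≤ u j - u i) (h1 : u j - u i ≤ (k : ℤ)) :
    Ev u (poch (e j - e i) qq k) = 0 := by
  rw [Ev_poch, sum_mul_single_sub]
  apply Finset.prod_eq_zero (i := (u j - u i - 1).toNat)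
  · simp only [Finset.mem_range]; omega
  · rw [sub_eq_zero, mul_assoc, ← zpow_add₀ qq_ne_zero, ← zpow_one_add₀ qq_ne_zero]
    have hz : (1 : ℤ) + (((u j - u i - 1).toNat : ℤ) + -(u j - u i)) = 0 := by omega
    rw [hz, zpow_zero]

/-! ### Support bounds -/

/-- Support bound predicate: every monomial has coordinate sum `0` and
`i`-th exponent at least `-D i`. -/
def Bnd {n : ℕ} (f : ML n) (D : Fin n → ℕ) : Prop :=
  ∀ m ∈ f.coeff.support, (∑ i, m i) = 0 ∧ ∀ i, -(D i : ℤ) ≤ m i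

lemma Bnd_mul {f g : ML n} {D E : Fin n → ℕ} (hf : Bnd f D) (hg : Bnd g E) :
    Bnd (f * g) (fun i => D i + E i) := by
  intro m hm
  have hmem := AddMonoidAlgebra.support_coeff_mul_subset f g hm
  rw [Finset.mem_add] at hmem
  obtain ⟨mf, hmf, mg, hmg, rfl⟩ := hmem
  obtain ⟨hf1, hf2⟩ := hf mf hmf
  obtain ⟨hg1, hg2⟩ := hg mg hmg
  constructor
  · rw [Finset.sum_congr rfl (fun l _ => Finsupp.add_apply mf mg l), Finset.sum_add_distrib,
      hf1, hg1, add_zero]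
  · intro i
    have h1 := hf2 i
    have h2 := hg2 i
    rw [Finsupp.add_apply]
    push_cast
    omega

lemma Bnd_prod {ι : Type*} (s : Finset ι) (f : ι → ML n) (D : ι → Fin n → ℕ)
    (h : ∀ t ∈ s, Bnd (f t) (D t)) :
    Bnd (∏ t ∈ s, f t) (fun i => ∑ t ∈ s, D t i) := by
  induction s using Finset.cons_induction with
  | empty =>
    intro m hm
    rw [Finset.prod_empty] at hm
    have h0 : m = 0 := by
      have := Finsupp.support_single_subset (a := (0 : Fin n →₀ ℤ)) (b := (1 : K))
      rw [AddMonoidAlgebra.one_def] at hm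
      simpa using Finset.mem_singleton.mp (this hm)
    subst h0
    simp
  | cons t s hts ih =>
    rw [Finset.prod_cons]
    have H := Bnd_mul (h t (Finset.mem_cons_self t s))
      (ih (fun t' ht' => h t' (Finset.mem_cons_of_mem ht')))
    have hsum : (fun i => D t i + ∑ t' ∈ s, D t' i) = (fun i => ∑ t' ∈ cons t s hts, D t' i) := by
      funext i; rw [Finset.sum_cons]
    rw [← hsum]
    exact H

lemma Bnd_binom (i j : Fin n) (c : K) :
    Bnd (1 - AddMonoidAlgebra.single (e i - e j) c) (fun l => if l = j then 1 else 0) := by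
  intro m hm
  rw [AddMonoidAlgebra.one_def] at hm
  have hmem := Finsupp.support_sub hm
  have hcases : m = 0 ∨ m = e i - e j := by
    rcases Finset.mem_union.mp hmem with h | h
    · left; simpa using Finsupp.support_single_subset h
    · right; simpa using Finsupp.support_single_subset h
  have happly : ∀ l, (e i - e j) l = (if i = l then (1:ℤ) else 0) - (if j = l then 1 else 0) := by
    intro l
    rw [Finsupp.sub_apply]
    simp [e, Finsupp.single_apply]
  rcases hcases with rfl | rfl
  · refine ⟨by simp, fun l => ?_⟩
    simp only [Finsupp.coe_zero, Pi.zero_apply]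
    split_ifs <;> simp
  · constructor
    · have h1 : (∑ l, ((if i = l then (1:ℤ) else 0) - (if j = l then 1 else 0))) = 0 := by
        rw [Finset.sum_sub_distrib]
        simp
      rw [Finset.sum_congr rfl (fun l _ => happly l)]
      exact h1
    · intro l
      rw [happly l]
      split_ifs <;> simp_all <;> omega

lemma Bnd_poch (i j : Fin n) (c : K) (k : ℕ) :
    Bnd (poch (e i - e j) c k) (fun l => if l = j then k else 0) := by
  have H := Bnd_prod (Finset.range k)
    (fun t => 1 - AddMonoidAlgebra.single (e i - e j) (c * qq ^ t))
    (fun _ l => if l = j then 1 else 0)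
    (fun t _ => Bnd_binom i j (c * qq ^ t))
  rw [poch]
  intro m hm
  obtain ⟨h1, h2⟩ := H m hm
  refine ⟨h1, fun l => ?_⟩
  have := h2 l
  by_cases hl : l = j <;> simp_all

/-! ### The covering families (kill lemma) -/

/-- Out-degree of `i` in the tournament `T` restricted to `V`. -/
def outdegOn (T : Finset (Fin n × Fin n)) (V : Finset (Fin n)) (i : Fin n) : ℕ :=
  (V.filter (fun j => (i, j) ∈ T)).card

lemma kill (T : Finset (Fin n × Fin n))
    (hirr : ∀ i : Fin n, (i, i) ∉ T)
    (htour : ∀ i j : Fin n, i ≠ j → ((i, j) ∈ T ↔ (j, i) ∉ T))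
    (V : Finset (Fin n))
    (hnt : ∃ i ∈ V, ∃ j ∈ V, ∃ k ∈ V, (i, j) ∈ T ∧ (j, k) ∈ T ∧ (i, k) ∉ T) :
    ∃ S : Fin n → Finset (Finset (Fin n)),
      (∀ i ∈ V, (S i).card ≤ outdegOn T V i) ∧
      ∀ u : Fin n → ℤ, Set.InjOn u ↑V →
        ∃ i ∈ V, V.filter (fun j => u j < u i) ∈ S i := by
  classical
  revert hnt
  induction V using Finset.strongInduction with
  | _ V ih =>
  intro hnt
  by_cases hod : ∀ i ∈ V, 0 < outdegOn T V i
  · refine ⟨fun _ => {∅}, fun i hi => by simp; exact hod i hi, fun u hu => ?_⟩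
    have hne : V.Nonempty := ⟨hnt.choose, hnt.choose_spec.1⟩
    obtain ⟨b, hb, hmin⟩ := Finset.exists_min_image V u hne
    refine ⟨b, hb, ?_⟩
    have hempty : V.filter (fun j => u j < u b) = ∅ :=
      Finset.filter_false_of_mem (fun j hj => not_lt.mpr (hmin j hj))
    rw [hempty]
    exact Finset.mem_singleton_self _
  · push_neg at hod
    obtain ⟨v, hv, hvo⟩ := hod
    have hvo0 : outdegOn T V v = 0 := by omega
    have hnov : ∀ x y : Fin n, (x, y) ∈ T → y ∈ V → x ≠ v := by
      intro x y hxy hy hxv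
      rw [hxv] at hxy
      have hmem : y ∈ V.filter (fun j => (v, j) ∈ T) := Finset.mem_filter.mpr ⟨hy, hxy⟩
      have hpos : 0 < outdegOn T V v := Finset.card_pos.mpr ⟨y, hmem⟩
      omega
    have hbeat : ∀ i ∈ V, i ≠ v → (i, v) ∈ T := by
      intro i hi hiv
      rw [htour i v hiv]
      intro hvi
      exact (hnov v i hvi hi) rfl
    have hnt' : ∃ i ∈ V.erase v, ∃ j ∈ V.erase v, ∃ k ∈ V.erase v,
        (i, j) ∈ T ∧ (j, k) ∈ T ∧ (i, k) ∉ T := by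
      obtain ⟨i, hi, j, hj, k, hk, hij, hjk, hik⟩ := hnt
      have hiv : i ≠ v := hnov i j hij hj
      have hjv : j ≠ v := hnov j k hjk hk
      by_cases hkv : k = v
      · exact absurd (hbeat i hi hiv) (hkv ▸ hik)
      · exact ⟨i, Finset.mem_erase.mpr ⟨hiv, hi⟩, j, Finset.mem_erase.mpr ⟨hjv, hj⟩,
          k, Finset.mem_erase.mpr ⟨hkv, hk⟩, hij, hjk, hik⟩
    obtain ⟨S', hS'c, hS'k⟩ := ih (V.erase v) (Finset.erase_ssubset hv) hnt'
    refine ⟨fun i => if i = v then ∅ else insert ∅ ((S' i).image (insert v)), ?_, ?_⟩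
    · intro i hi
      by_cases hiv : i = v
      · simp [hiv]
      · simp only [if_neg hiv]
        have h1 : (insert ∅ ((S' i).image (insert v))).card ≤ (S' i).card + 1 := by
          calc (insert ∅ ((S' i).image (insert v))).card
              ≤ ((S' i).image (insert v)).card + 1 := Finset.card_insert_le _ _
            _ ≤ (S' i).card + 1 := by
                have := Finset.card_image_le (s := S' i) (f := insert v); omega
        have h2 : (S' i).card ≤ outdegOn T (V.erase v) i :=
          hS'c i (Finset.mem_erase.mpr ⟨hiv, hi⟩)
        have h3 : outdegOn T (V.erase v) i + 1 ≤ outdegOn T V i := by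
          unfold outdegOn
          have hfe : V.filter (fun j => (i, j) ∈ T)
              = insert v ((V.erase v).filter (fun j => (i, j) ∈ T)) := by
            conv_lhs => rw [← Finset.insert_erase hv]
            rw [Finset.filter_insert, if_pos (hbeat i hi hiv)]
          rw [hfe, Finset.card_insert_of_notMem (by simp)]
        omega
    · intro u hu
      obtain ⟨b, hb, hmin⟩ := Finset.exists_min_image V u ⟨v, hv⟩
      by_cases hbv : b = v
      · have husub : Set.InjOn u ↑(V.erase v) :=
          hu.mono (by exact_mod_cast Finset.erase_subset v V)
        obtain ⟨i, hi, hSi⟩ := hS'k u husub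
        have hiv : i ≠ v := (Finset.mem_erase.mp hi).1
        have hiV : i ∈ V := (Finset.mem_erase.mp hi).2
        refine ⟨i, hiV, ?_⟩
        simp only [if_neg hiv]
        have hvlt : u v < u i := by
          have h1 : u v ≤ u i := hbv ▸ hmin i hiV
          have h2 : u v ≠ u i := fun h => hiv (hu (by simpa using hv) (by simpa using hiV) h).symm
          exact lt_of_le_of_ne h1 h2
        have hfilter : V.filter (fun j => u j < u i)
            = insert v ((V.erase v).filter (fun j => u j < u i)) := by
          conv_lhs => rw [← Finset.insert_erase hv]
          rw [Finset.filter_insert, if_pos hvlt]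
        rw [hfilter]
        exact Finset.mem_insert_of_mem (Finset.mem_image_of_mem _ hSi)
      · refine ⟨b, hb, ?_⟩
        simp only [if_neg hbv]
        have hempty : V.filter (fun j => u j < u b) = ∅ :=
          Finset.filter_false_of_mem (fun j hj => not_lt.mpr (hmin j hj))
        rw [hempty]
        exact Finset.mem_insert_self _ _

/-! ### The tiling lemma -/

lemma interval_sum_le (A : Fin n → ℤ) (hA : ∀ i, 0 < A i) (u : Fin n → ℤ)
    (hsep : ∀ i j : Fin n, i ≠ j → A i ≤ u i - u j ∨ A j ≤ u j - u i)
    (s : Finset (Fin n)) (lo hi : ℤ) (hlohi : lo ≤ hi)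
    (hsub : ∀ k ∈ s, lo ≤ u k - A k ∧ u k ≤ hi) :
    ∑ k ∈ s, A k ≤ hi - lo := by
  classical
  set J : Fin n → Finset ℤ := fun k => Finset.Ioc (u k - A k) (u k) with hJ
  have hdisj : ∀ x ∈ s, ∀ y ∈ s, x ≠ y → Disjoint (J x) (J y) := by
    intro x _ y _ hxy
    rcases hsep x y hxy with h | h <;>
      · rw [Finset.disjoint_left]
        intro z hz hz'
        simp only [hJ, Finset.mem_Ioc] at hz hz'
        omega
  have h1 := Finset.card_biUnion hdisj
  have h2 : s.biUnion J ⊆ Finset.Ioc lo hi := by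
    intro z hz
    obtain ⟨k, hk, hzk⟩ := Finset.mem_biUnion.mp hz
    simp only [hJ, Finset.mem_Ioc] at hzk ⊢
    obtain ⟨hk1, hk2⟩ := hsub k hk
    omega
  have h3 := Finset.card_le_card h2
  rw [h1, Int.card_Ioc] at h3
  have h4 : ∑ k ∈ s, (J k).card = ∑ k ∈ s, (A k).toNat := by
    refine Finset.sum_congr rfl (fun k _ => ?_)
    rw [hJ, Int.card_Ioc]
    congr 1
    omega
  rw [h4] at h3
  have h5 : ((∑ k ∈ s, (A k).toNat : ℕ) : ℤ) = ∑ k ∈ s, A k := by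
    push_cast
    exact Finset.sum_congr rfl (fun k _ => Int.toNat_of_nonneg (le_of_lt (hA k)))
  omega

lemma tiling (A : Fin n → ℤ) (hA : ∀ i, 0 < A i) (u : Fin n → ℤ)
    (hlo : ∀ i, A i ≤ u i) (hhi : ∀ i, u i ≤ ∑ j, A j)
    (hsep : ∀ i j : Fin n, i ≠ j → A i ≤ u i - u j ∨ A j ≤ u j - u i)
    (i : Fin n) :
    u i = A i + ∑ j ∈ Finset.univ.filter (fun j => u j < u i), A j := by
  classical
  set L := Finset.univ.filter (fun j => u j < u i) with hL
  set U := Finset.univ.filter (fun j => u i < u j) with hU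
  have hiL : i ∉ L := by simp [hL]
  have h1 : A i + ∑ j ∈ L, A j ≤ u i := by
    have hpos : (0:ℤ) ≤ u i - 0 := by have := hlo i; have := hA i; omega
    have := interval_sum_le A hA u hsep (insert i L) 0 (u i)
      (by have := hlo i; have := hA i; omega)
      (by
        intro k hk
        rcases Finset.mem_insert.mp hk with rfl | hkL
        · exact ⟨by have := hlo k; omega, le_refl _⟩
        · have hklt : u k < u i := by
            have hk' := hkL
            rw [hL] at hk'
            exact (Finset.mem_filter.mp hk').2
          exact ⟨by have := hlo k; omega, le_of_lt hklt⟩)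
    rw [Finset.sum_insert hiL] at this
    omega
  have h2 : ∑ j ∈ U, A j ≤ (∑ j, A j) - u i := by
    refine interval_sum_le A hA u hsep U (u i) (∑ j, A j) (hhi i) ?_
    intro k hk
    have hklt : u i < u k := by
      have hk' := hk
      rw [hU] at hk'
      exact (Finset.mem_filter.mp hk').2
    have hik : i ≠ k := fun h => by subst h; omega
    constructor
    · rcases hsep i k hik with h | h
      · have := hA i; omega
      · omega
    · exact hhi k
  have hpart : Finset.univ.erase i = L ∪ U := by
    ext k
    simp only [Finset.mem_erase, Finset.mem_union, hL, hU, Finset.mem_filter,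
      Finset.mem_univ, true_and]
    constructor
    · rintro ⟨hki, -⟩
      rcases hsep k i hki with h | h
      · right; have := hA i; have := hA k; omega
      · left; have := hA i; have := hA k; omega
    · rintro (h | h)
      · exact ⟨fun he => by subst he; omega, trivial⟩
      · exact ⟨fun he => by subst he; omega, trivial⟩
  have hLU : Disjoint L U := by
    rw [Finset.disjoint_left]
    intro k hk hk'
    have h1 := (Finset.mem_filter.mp (hL ▸ hk)).2
    have h2 := (Finset.mem_filter.mp (hU ▸ hk')).2
    omega
  have htot : ∑ j ∈ L, A j + ∑ j ∈ U, A j + A i = ∑ j, A j := by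
    rw [← Finset.sum_union hLU, ← hpart, Finset.sum_erase_add _ _ (Finset.mem_univ i)]
  omega

/-! ### Grid sums -/

lemma S_eval (B : Finset ℤ) (dd : ℕ) (hB : B.card = dd + 1) (t : ℤ) (ht : 0 ≤ t)
    (htd : t ≤ (dd : ℤ)) :
    (∑ x ∈ B, zq x ^ t * (∏ y ∈ B.erase x, (zq x - zq y))⁻¹)
      = if t = (dd : ℤ) then 1 else 0 := by
  have h1 : ∀ x ∈ B, zq x ^ t = zq x ^ (t.toNat) := fun x _ => by
    rw [← zpow_natCast, Int.toNat_of_nonneg ht]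
  rw [Finset.sum_congr rfl (fun x hx => by rw [h1 x hx])]
  rw [zlag_sum B t.toNat (by rw [hB]; omega)]
  rw [hB]
  exact if_congr (by omega) rfl rfl

/-! ### Degree bookkeeping -/

lemma d_arith (T : Finset (Fin n × Fin n))
    (hirr : ∀ i : Fin n, (i, i) ∉ T)
    (htour : ∀ i j : Fin n, i ≠ j → ((i, j) ∈ T ↔ (j, i) ∉ T))
    (a : Fin n → ℕ) (ha : ∀ i, 0 < a i) (i : Fin n) :
    (∑ p ∈ T, ((if i = p.2 then a p.1 else 0) + (if i = p.1 then a p.2 - 1 else 0)))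
      + outdegOn T Finset.univ i + a i = ∑ j, a j := by
  classical
  set In := Finset.univ.filter (fun j => (j, i) ∈ T) with hIn
  set Out := Finset.univ.filter (fun j => (i, j) ∈ T) with hOut
  have hsplit : (∑ p ∈ T, ((if i = p.2 then a p.1 else 0) + (if i = p.1 then a p.2 - 1 else 0)))
      = (∑ p ∈ T, (if i = p.2 then a p.1 else 0))
        + (∑ p ∈ T, (if i = p.1 then a p.2 - 1 else 0)) := Finset.sum_add_distrib
  have hin : (∑ p ∈ T, (if i = p.2 then a p.1 else 0)) = ∑ j ∈ In, a j := by
    rw [← Finset.sum_filter]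
    refine Finset.sum_nbij' (fun p => p.1) (fun j => (j, i)) ?_ ?_ ?_ ?_ ?_
    · intro p hp
      obtain ⟨hpT, hpi⟩ := Finset.mem_filter.mp hp
      rw [hIn]
      refine Finset.mem_filter.mpr ⟨Finset.mem_univ _, ?_⟩
      have hpe : (p.1, i) = p := by rw [hpi]
      rw [hpe]; exact hpT
    · intro j hj
      rw [hIn] at hj
      exact Finset.mem_filter.mpr ⟨(Finset.mem_filter.mp hj).2, rfl⟩
    · intro p hp
      obtain ⟨-, hpi⟩ := Finset.mem_filter.mp hp
      rw [hpi]
    · intro j hj; rfl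
    · intro p hp; rfl
  have hout : (∑ p ∈ T, (if i = p.1 then a p.2 - 1 else 0)) = ∑ j ∈ Out, (a j - 1) := by
    rw [← Finset.sum_filter]
    refine Finset.sum_nbij' (fun p => p.2) (fun j => (i, j)) ?_ ?_ ?_ ?_ ?_
    · intro p hp
      obtain ⟨hpT, hpi⟩ := Finset.mem_filter.mp hp
      rw [hOut]
      refine Finset.mem_filter.mpr ⟨Finset.mem_univ _, ?_⟩
      have hpe : (i, p.2) = p := by rw [hpi]
      rw [hpe]; exact hpT
    · intro j hj
      rw [hOut] at hj
      exact Finset.mem_filter.mpr ⟨(Finset.mem_filter.mp hj).2, rfl⟩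
    · intro p hp
      obtain ⟨-, hpi⟩ := Finset.mem_filter.mp hp
      rw [hpi]
    · intro j hj; rfl
    · intro p hp; rfl
  have houtc : ∑ j ∈ Out, (a j - 1) + Out.card = ∑ j ∈ Out, a j := by
    rw [Finset.card_eq_sum_ones, ← Finset.sum_add_distrib]
    exact Finset.sum_congr rfl (fun j _ => by have := ha j; omega)
  have hdisj : Disjoint In Out := by
    rw [Finset.disjoint_left]
    intro j hj hj'
    rw [hIn] at hj; rw [hOut] at hj'
    have h1 : (j, i) ∈ T := (Finset.mem_filter.mp hj).2
    have h2 : (i, j) ∈ T := (Finset.mem_filter.mp hj').2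
    have hji : j ≠ i := fun h => hirr i (by rw [h] at h1; exact h1)
    exact (htour j i hji).mp h1 h2
  have hunion : In ∪ Out = Finset.univ.erase i := by
    ext j
    rw [Finset.mem_union, hIn, hOut]
    simp only [Finset.mem_filter, Finset.mem_univ, true_and, Finset.mem_erase, and_true]
    constructor
    · rintro (h | h)
      · exact fun he => hirr i (by rw [he] at h; exact h)
      · exact fun he => hirr i (by rw [he] at h; exact h)
    · intro hji
      by_cases h : (j, i) ∈ T
      · exact Or.inl h
      · exact Or.inr ((htour i j (Ne.symm hji)).mpr h)
  have hsum2 : ∑ j ∈ In, a j + ∑ j ∈ Out, a j = ∑ j ∈ Finset.univ.erase i, a j := by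
    rw [← Finset.sum_union hdisj, hunion]
  have hsum3 : ∑ j ∈ Finset.univ.erase i, a j + a i = ∑ j, a j :=
    Finset.sum_erase_add _ _ (Finset.mem_univ i)
  have hcard : outdegOn T Finset.univ i = Out.card := by rw [outdegOn, hOut]
  omega

end TNT

/-- Tournament form, nontransitive case (Bressoud–Goulden's Master Theorem). -/
theorem tournamentNontransitive (n : ℕ) (a : Fin n → ℕ) (ha : ∀ i, 0 < a i)
    (T : Finset (Fin n × Fin n))
    (hirr : ∀ i : Fin n, (i, i) ∉ T)
    (htour : ∀ i j : Fin n, i ≠ j → ((i, j) ∈ T ↔ (j, i) ∉ T))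
    (hnontrans : ¬ ∀ i j k : Fin n, (i, j) ∈ T → (j, k) ∈ T → (i, k) ∈ T) :
    CT (∏ p ∈ T, poch (e p.1 - e p.2) 1 (a p.1) * poch (e p.2 - e p.1) qq (a p.2 - 1))
      = 0 := by
  classical
  set F : ML n := ∏ p ∈ T, poch (e p.1 - e p.2) 1 (a p.1) * poch (e p.2 - e p.1) qq (a p.2 - 1)
    with hF
  set d : Fin n → ℕ := fun i =>
    ∑ p ∈ T, ((if i = p.2 then a p.1 else 0) + (if i = p.1 then a p.2 - 1 else 0)) with hd
  -- support bound
  have hBndF : TNT.Bnd F d :=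
    TNT.Bnd_prod T
      (fun p => poch (e p.1 - e p.2) 1 (a p.1) * poch (e p.2 - e p.1) qq (a p.2 - 1))
      (fun p l => (if l = p.2 then a p.1 else 0) + (if l = p.1 then a p.2 - 1 else 0))
      (fun p _ => TNT.Bnd_mul (TNT.Bnd_poch p.1 p.2 1 (a p.1))
        (TNT.Bnd_poch p.2 p.1 qq (a p.2 - 1)))
  -- the covering family
  have hnt : ∃ i ∈ (Finset.univ : Finset (Fin n)), ∃ j ∈ Finset.univ, ∃ k ∈ Finset.univ,
      (i, j) ∈ T ∧ (j, k) ∈ T ∧ (i, k) ∉ T := by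
    push_neg at hnontrans
    obtain ⟨i, j, k, h1, h2, h3⟩ := hnontrans
    exact ⟨i, Finset.mem_univ i, j, Finset.mem_univ j, k, Finset.mem_univ k, h1, h2, h3⟩
  obtain ⟨S, hScard, hSkill⟩ := TNT.kill T hirr htour Finset.univ hnt
  -- size arithmetic
  have hdsize : ∀ i, (d i : ℤ) + (TNT.outdegOn T Finset.univ i : ℤ) + (a i : ℤ)
      = ∑ j, (a j : ℤ) := by
    intro i
    have h := TNT.d_arith T hirr htour a ha i
    have h2 : d i + TNT.outdegOn T Finset.univ i + a i = ∑ j, a j := by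
      rw [hd]; exact h
    exact_mod_cast h2
  -- the blocking grids
  have hBex : ∀ i : Fin n, ∃ B : Finset ℤ,
      B ⊆ Finset.Icc ((a i : ℤ)) (∑ j, (a j : ℤ))
          \ ((S i).image (fun s => (a i : ℤ) + ∑ j ∈ s, (a j : ℤ)))
        ∧ B.card = d i + 1 := by
    intro i
    have hcard1 : (Finset.Icc ((a i : ℤ)) (∑ j, (a j : ℤ))).card
        = ((∑ j, (a j : ℤ)) + 1 - (a i : ℤ)).toNat := Int.card_Icc _ _
    have hcard2 : ((S i).image (fun s => (a i : ℤ) + ∑ j ∈ s, (a j : ℤ))).card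
        ≤ TNT.outdegOn T Finset.univ i :=
      le_trans (Finset.card_image_le) (hScard i (Finset.mem_univ i))
    have hcard3 := Finset.card_le_card_sdiff_add_card
      (s := Finset.Icc ((a i : ℤ)) (∑ j, (a j : ℤ)))
      (t := (S i).image (fun s => (a i : ℤ) + ∑ j ∈ s, (a j : ℤ)))
    have h4 := hdsize i
    have h5 := ha i
    exact Finset.exists_subset_card_eq (by omega)
  choose B hBsub hBcard using hBex
  -- vanishing of all grid evaluations
  have hvanish : ∀ u ∈ Fintype.piFinset B, TNT.Ev u F = 0 := by
    intro u hu
    rw [Fintype.mem_piFinset] at hu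
    have hwin : ∀ i, (a i : ℤ) ≤ u i ∧ u i ≤ ∑ j, (a j : ℤ) := fun i =>
      Finset.mem_Icc.mp (Finset.mem_sdiff.mp (hBsub i (hu i))).1
    have hcoll : ∃ p ∈ T, (0 ≤ u p.1 - u p.2 ∧ u p.1 - u p.2 < (a p.1 : ℤ)) ∨
        (1 ≤ u p.2 - u p.1 ∧ u p.2 - u p.1 ≤ (a p.2 : ℤ) - 1) := by
      by_contra hno
      have hsep : ∀ i j : Fin n, i ≠ j →
          (a i : ℤ) ≤ u i - u j ∨ (a j : ℤ) ≤ u j - u i := by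
        intro i j hij
        have hedge : (i, j) ∈ T ∨ (j, i) ∈ T := by
          by_cases h : (i, j) ∈ T
          · exact Or.inl h
          · exact Or.inr ((htour j i (Ne.symm hij)).mpr h)
        have hai := ha i
        have haj := ha j
        rcases hedge with h | h
        · have hn : ¬ ((0 ≤ u i - u j ∧ u i - u j < (a i : ℤ)) ∨
              (1 ≤ u j - u i ∧ u j - u i ≤ (a j : ℤ) - 1)) :=
            fun hcontra => hno ⟨(i, j), h, hcontra⟩
          omega
        · have hn : ¬ ((0 ≤ u j - u i ∧ u j - u i < (a j : ℤ)) ∨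
              (1 ≤ u i - u j ∧ u i - u j ≤ (a i : ℤ) - 1)) :=
            fun hcontra => hno ⟨(j, i), h, hcontra⟩
          omega
      have hinj : Set.InjOn u ↑(Finset.univ : Finset (Fin n)) := by
        intro x _ y _ hxy
        by_contra hne
        have hax := ha x
        have hay := ha y
        rcases hsep x y hne with h | h <;> omega
      obtain ⟨i, -, hSi⟩ := hSkill u hinj
      have htile := TNT.tiling (fun j => (a j : ℤ)) (fun j => by show (0:ℤ) < (a j : ℤ); exact_mod_cast ha j) u
        (fun j => (hwin j).1) (fun j => (hwin j).2) hsep i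
      have hmem : u i ∈ (S i).image (fun s => (a i : ℤ) + ∑ j ∈ s, (a j : ℤ)) :=
        Finset.mem_image.mpr ⟨Finset.univ.filter (fun j => u j < u i), hSi, htile.symm⟩
      exact (Finset.mem_sdiff.mp (hBsub i (hu i))).2 hmem
    obtain ⟨p, hp, hc⟩ := hcoll
    rw [hF, map_prod]
    refine Finset.prod_eq_zero hp ?_
    rw [map_mul]
    rcases hc with ⟨h0, h1⟩ | ⟨h0, h1⟩
    · rw [TNT.Ev_poch1_zero u p.1 p.2 (a p.1) h0 h1, zero_mul]
    · have hcast : ((a p.2 - 1 : ℕ) : ℤ) = (a p.2 : ℤ) - 1 := by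
        have := ha p.2; omega
      rw [TNT.Ev_poch2_zero u p.1 p.2 (a p.2 - 1) h0 (by rw [hcast]; exact h1), mul_zero]
  -- the weighted evaluation functional
  set W : (Fin n → ℤ) → K :=
    fun u => ∏ i, (∏ y ∈ (B i).erase (u i), (TNT.zq (u i) - TNT.zq y))⁻¹ with hW
  set dv : Fin n →₀ ℤ := Finsupp.equivFunOnFinite.symm (fun i => (d i : ℤ)) with hdv
  have hdv_apply : ∀ i, dv i = (d i : ℤ) := fun i => rfl
  set G : ML n := AddMonoidAlgebra.single dv 1 * F with hG
  have hGsupp : ∀ m ∈ G.coeff.support, (∀ i, 0 ≤ m i) ∧ (∑ i, m i) = ∑ i, (d i : ℤ) := by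
    intro m hm
    rw [hG] at hm
    have hmem := AddMonoidAlgebra.support_coeff_mul_subset _ _ hm
    rw [Finset.mem_add] at hmem
    obtain ⟨m1, hm1, m2, hm2, rfl⟩ := hmem
    have hm1' : m1 = dv := by simpa using Finsupp.support_single_subset hm1
    subst hm1'
    obtain ⟨hs, hb⟩ := hBndF m2 hm2
    constructor
    · intro i
      have := hb i
      rw [Finsupp.add_apply, hdv_apply]
      omega
    · rw [Finset.sum_congr rfl (fun l _ => Finsupp.add_apply dv m2 l),
        Finset.sum_add_distrib, hs, add_zero]
      exact Finset.sum_congr rfl (fun l _ => hdv_apply l)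
  -- value of the functional on a single monomial
  have hPhiSingle : ∀ (m : Fin n →₀ ℤ) (b : K),
      (∑ u ∈ Fintype.piFinset B, W u * TNT.Ev u (AddMonoidAlgebra.single m b))
        = b * ∏ i, (∑ x ∈ B i,
            TNT.zq x ^ (m i) * (∏ y ∈ (B i).erase x, (TNT.zq x - TNT.zq y))⁻¹) := by
    intro m b
    rw [Finset.prod_univ_sum, Finset.mul_sum]
    refine Finset.sum_congr rfl (fun u hu => ?_)
    rw [TNT.Ev_single]
    have hqd : (qq : K) ^ (- ∑ i, u i * m i) = ∏ i, TNT.zq (u i) ^ (m i) := by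
      have h1 : (- ∑ i, u i * m i) = ∑ i, -(u i * m i) := by
        rw [← Finset.sum_neg_distrib]
      rw [h1, ← TNT.prod_qq_zpow]
      refine Finset.prod_congr rfl (fun i _ => ?_)
      rw [← neg_mul, zpow_mul]
      rfl
    rw [hqd]
    simp only [hW]
    rw [Finset.prod_mul_distrib]
    ring
  -- grid sums pick out the top coefficient
  have hS_eval : ∀ (i : Fin n) (t : ℤ), 0 ≤ t → t ≤ (d i : ℤ) →
      (∑ x ∈ B i, TNT.zq x ^ t * (∏ y ∈ (B i).erase x, (TNT.zq x - TNT.zq y))⁻¹)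
        = if t = (d i : ℤ) then 1 else 0 :=
    fun i t ht htd => TNT.S_eval (B i) (d i) (hBcard i) t ht htd
  -- expanding G into monomials
  have hsum_single : ∑ m ∈ G.coeff.support, AddMonoidAlgebra.single m (G.coeff m) = G :=
    AddMonoidAlgebra.sum_coeff_single G
  have hEvG : ∀ u : Fin n → ℤ, TNT.Ev u G
      = ∑ m ∈ G.coeff.support, TNT.Ev u (AddMonoidAlgebra.single m (G.coeff m)) := by
    intro u
    rw [← map_sum, hsum_single]
  have hPhiG : (∑ u ∈ Fintype.piFinset B, W u * TNT.Ev u G) = G.coeff dv := by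
    rw [Finset.sum_congr rfl (fun u _ => by rw [hEvG u, Finset.mul_sum])]
    rw [Finset.sum_comm]
    rw [Finset.sum_congr rfl (fun m _ => hPhiSingle m (G.coeff m))]
    have hterm : ∀ m ∈ G.coeff.support, m ≠ dv →
        G.coeff m * ∏ i, (∑ x ∈ B i,
          TNT.zq x ^ (m i) * (∏ y ∈ (B i).erase x, (TNT.zq x - TNT.zq y))⁻¹) = 0 := by
      intro m hm hne
      obtain ⟨hpos, hsum⟩ := hGsupp m hm
      have hex : ∃ i, m i < (d i : ℤ) := by
        by_contra hall
        push_neg at hall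
        have hle : ∀ i ∈ (Finset.univ : Finset (Fin n)), (d i : ℤ) ≤ m i := fun i _ => hall i
        have heq := (Finset.sum_eq_sum_iff_of_le hle).mp hsum.symm
        exact hne (Finsupp.ext (fun i => by
          rw [hdv_apply i, ← heq i (Finset.mem_univ i)]))
      obtain ⟨i, hi⟩ := hex
      apply mul_eq_zero_of_right
      apply Finset.prod_eq_zero (Finset.mem_univ i)
      rw [hS_eval i (m i) (hpos i) (le_of_lt hi), if_neg (by omega)]
    rw [Finset.sum_eq_single dv hterm (fun hdvn => by
      rw [Finsupp.notMem_support_iff.mp hdvn, zero_mul])]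
    have hone : ∀ i ∈ (Finset.univ : Finset (Fin n)),
        (∑ x ∈ B i, TNT.zq x ^ (dv i) * (∏ y ∈ (B i).erase x, (TNT.zq x - TNT.zq y))⁻¹)
          = 1 := by
      intro i _
      rw [hdv_apply i, hS_eval i ((d i : ℤ)) (Int.natCast_nonneg _) (le_refl _), if_pos rfl]
    rw [Finset.prod_congr rfl hone, Finset.prod_const_one, mul_one]
  have hPhiG0 : (∑ u ∈ Fintype.piFinset B, W u * TNT.Ev u G) = 0 := by
    refine Finset.sum_eq_zero (fun u hu => ?_)
    rw [hG, map_mul, hvanish u hu, mul_zero, mul_zero]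
  have hGdv : G.coeff dv = 0 := by rw [← hPhiG, hPhiG0]
  have hCT : G.coeff dv = F.coeff 0 := by
    rw [hG, AddMonoidAlgebra.coeff_single_mul_apply, one_mul, neg_add_cancel]
  rw [CT, ← hCT, hGdv]
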